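/- Let G be a graph, H a set of vertices such that the induced subgraph G[H] contains an independent set S of size t with N_G[S] ⊆ H and α(G[H]) = t. Then α(G) = α(G − H) + t. -/

import Mathlib

open SimpleGraph

/-- A finset is independent in `G` if no two distinct members are adjacent. -/
def IsIndepFinset {V : Type*} (G : SimpleGraph V) (s : Finset V) : Prop :=
  ∀ v ∈ s, ∀ w ∈ s, v ≠ w → ¬ G.Adj v w

/-- The independence number: the largest cardinality of an independent finset. -/
noncomputable def indepNum {V : Type*} (G : SimpleGraph V) : ℕ :=
  sSup {n | ∃ s : Finset V, IsIndepFinset G s ∧ s.card = n}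

/-- The closed neighborhood of a vertex, as a finset. -/
def closedNbhd {V : Type*} [Fintype V] [DecidableEq V] (G : SimpleGraph V)
    [DecidableRel G.Adj] (v : V) : Finset V :=
  insert v (G.neighborFinset v)

lemma indep_bdd {V : Type*} [Fintype V] (G : SimpleGraph V) :
    BddAbove {n | ∃ s : Finset V, IsIndepFinset G s ∧ s.card = n} :=
  ⟨Fintype.card V, fun n ⟨s, _, hc⟩ => hc ▸ s.card_le_univ⟩

lemma card_le_indepNum {V : Type*} [Fintype V] (G : SimpleGraph V) {s : Finset V}
    (h : IsIndepFinset G s) : s.card ≤ _root_.indepNum G :=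
  le_csSup (indep_bdd G) ⟨s, h, rfl⟩

lemma exists_indep_card_eq {V : Type*} [Fintype V] (G : SimpleGraph V) :
    ∃ s : Finset V, IsIndepFinset G s ∧ s.card = _root_.indepNum G :=
  by
  have h1 : {n | ∃ s : Finset V, IsIndepFinset G s ∧ s.card = n}.Nonempty :=
    ⟨0, ∅, fun v hv => absurd hv (by simp), rfl⟩
  exact Nat.sSup_mem h1 (indep_bdd G)

theorem stmt_9 {V : Type*} [Fintype V] [DecidableEq V] (G : SimpleGraph V)
    [DecidableRel G.Adj] (H : Finset V) (S : Finset V) (t : ℕ)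
    (hSH : S ⊆ H) (hScard : S.card = t)
    (hSind : IsIndepFinset G S)
    (hN : ∀ v ∈ S, closedNbhd G v ⊆ H)
    (hα : _root_.indepNum (G.induce (↑H : Set V)) = t) :
    _root_.indepNum G = _root_.indepNum (G.induce ((↑H : Set V)ᶜ)) + t := by
  apply le_antisymm
  · obtain ⟨A, hA, hAcard⟩ := exists_indep_card_eq G
    rw [← hAcard, ← Finset.card_sdiff_add_card_inter A H]
    gcongr
    · -- (A \ H).card ≤ indepNum (G.induce ↑Hᶜ)
      let f : {x // x ∈ A \ H} → ((↑H : Set V)ᶜ : Set V) := fun x =>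
        ⟨x.1, by have := x.2; simp only [Finset.mem_sdiff] at this; simpa using this.2⟩
      have hinj : Function.Injective f := fun a b hab => Subtype.ext (congrArg Subtype.val hab : ((f a : V)) = (f b : V))
      have hkey : IsIndepFinset (G.induce ((↑H : Set V)ᶜ)) ((A \ H).attach.image f) := by
        intro v hv w hw hvw hadj
        simp only [Finset.mem_image, Finset.mem_attach, true_and] at hv hw
        obtain ⟨a, rfl⟩ := hv
        obtain ⟨b, rfl⟩ := hw
        have hab : (a : V) ≠ b := fun h => hvw (congrArg f (Subtype.ext h))
        exact hA a (Finset.mem_sdiff.mp a.2).1 b (Finset.mem_sdiff.mp b.2).1 hab hadj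
      calc (A \ H).card = ((A \ H).attach.image f).card := by
            rw [Finset.card_image_of_injective _ hinj, Finset.card_attach]
        _ ≤ _ := card_le_indepNum _ hkey
    · -- (A ∩ H).card ≤ t
      rw [← hα]
      let f : {x // x ∈ A ∩ H} → ((↑H : Set V)) := fun x =>
        ⟨x.1, by have := x.2; simp only [Finset.mem_inter] at this; simpa using this.2⟩
      have hinj : Function.Injective f := fun a b hab => Subtype.ext (congrArg Subtype.val hab : ((f a : V)) = (f b : V))
      have hkey : IsIndepFinset (G.induce ((↑H : Set V))) ((A ∩ H).attach.image f) := by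
        intro v hv w hw hvw hadj
        simp only [Finset.mem_image, Finset.mem_attach, true_and] at hv hw
        obtain ⟨a, rfl⟩ := hv
        obtain ⟨b, rfl⟩ := hw
        have hab : (a : V) ≠ b := fun h => hvw (congrArg f (Subtype.ext h))
        exact hA a (Finset.mem_inter.mp a.2).1 b (Finset.mem_inter.mp b.2).1 hab hadj
      calc (A ∩ H).card = ((A ∩ H).attach.image f).card := by
            rw [Finset.card_image_of_injective _ hinj, Finset.card_attach]
        _ ≤ _ := card_le_indepNum _ hkey
  · obtain ⟨B, hB, hBcard⟩ := exists_indep_card_eq (G.induce ((↑H : Set V)ᶜ))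
    rw [← hBcard, ← hScard]
    set C : Finset V := B.image Subtype.val ∪ S with hC
    have hmemB : ∀ x ∈ B.image Subtype.val, x ∉ H := by
      intro x hx
      simp only [Finset.mem_image] at hx
      obtain ⟨a, _, rfl⟩ := hx
      exact a.2
    have hdisj : Disjoint (B.image Subtype.val) S := by
      rw [Finset.disjoint_left]
      intro x hx hxS
      exact hmemB x hx (hSH hxS)
    have hCcard : C.card = B.card + S.card := by
      rw [hC, Finset.card_union_of_disjoint hdisj,
        Finset.card_image_of_injective _ Subtype.val_injective]
    have hCind : IsIndepFinset G C := by
      intro v hv w hw hvw hadj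
      rw [hC, Finset.mem_union] at hv hw
      have cross : ∀ a ∈ S, ∀ b ∈ B.image Subtype.val, ¬ G.Adj a b := by
        intro a ha b hb hab
        exact hmemB b hb (hN a ha (by simp [closedNbhd, hab]))
      rcases hv with hv | hv <;> rcases hw with hw | hw
      · simp only [Finset.mem_image] at hv hw
        obtain ⟨a, haB, rfl⟩ := hv
        obtain ⟨b, hbB, rfl⟩ := hw
        exact hB a haB b hbB (fun h => hvw (congrArg _ h)) hadj
      · exact cross w hw v hv hadj.symm
      · exact cross v hv w hw hadj
      · exact hSind v hv w hw hvw hadj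
    calc B.card + S.card = C.card := hCcard.symm
      _ ≤ _root_.indepNum G := card_le_indepNum G hCind
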